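/- Let A be a Banach lattice algebra with identity e and let p ∈ A be a band projection (p ≥ 0 and for every x ≥ 0: pxp ≤ x and p²xp² = pxp). Then the following are equivalent: (i) p is an order idempotent (p² = p and p ≤ e); (ii) p² = p; (iii) p ∈ A_e, i.e., p ≤ λ•e for some λ ≥ 0; (iv) there exist λ > ‖p‖ and q ∈ A with q ≥ 0 such that q(λ•e + p) = e = (λ•e + p)q, i.e., λ•e + p is invertible with positive inverse for some λ > ‖p‖. -/

import Mathlib

set_option maxHeartbeats 1600000 in
/-- For a band projection `p` in a Banach lattice algebra with
identity `e`, the following are equivalent: `p` is an order idempotent; `p` is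
idempotent; `p` lies in the ideal generated by `e`; `λ • e + p` is invertible with
positive inverse for some `λ > ‖p‖`. -/
theorem band_projection_order_idempotent_tfae
    {A : Type*} [NormedAddCommGroup A] [Lattice A] [HasSolidNorm A]
    [IsOrderedAddMonoid A] [NormedSpace ℝ A]
    [PosSMulStrictMono ℝ A] [PosSMulReflectLT ℝ A] [CompleteSpace A]
    (mul : A →ₗ[ℝ] A →ₗ[ℝ] A)
    (mul_assoc : ∀ a b c : A, mul (mul a b) c = mul a (mul b c))
    (norm_mul_le : ∀ a b : A, ‖mul a b‖ ≤ ‖a‖ * ‖b‖)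
    (mul_nonneg : ∀ a b : A, 0 ≤ a → 0 ≤ b → 0 ≤ mul a b)
    (e : A) (one_mul : ∀ a : A, mul e a = a) (mul_one : ∀ a : A, mul a e = a)
    (norm_e : ‖e‖ = 1)
    -- `p` is a band projection
    (p : A) (hp : 0 ≤ p)
    (hbp : ∀ x : A, 0 ≤ x → mul p (mul x p) ≤ x ∧
      mul (mul p p) (mul x (mul p p)) = mul p (mul x p)) :
    [ mul p p = p ∧ p ≤ e,
      mul p p = p,
      ∃ l : ℝ, 0 ≤ l ∧ p ≤ l • e,
      ∃ l : ℝ, ‖p‖ < l ∧ ∃ q : A, 0 ≤ q ∧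
        mul q (l • e + p) = e ∧ mul (l • e + p) q = e ].TFAE := by
  -- Part 0 : the identity is positive
  have he : (0:A) ≤ e := by
    have hc0 : 0 ≤ e⁺ := posPart_nonneg e
    have ha0 : 0 ≤ e⁻ := negPart_nonneg e
    have hca : e⁺ = e + e⁻ := sub_eq_iff_eq_add.mp (posPart_sub_negPart e)
    have hnc : ‖e⁺‖ ≤ 1 := by
      rw [← norm_e]
      apply HasSolidNorm.solid
      rw [abs_of_nonneg hc0, ← posPart_add_negPart e]
      exact le_add_of_nonneg_right ha0
    let pw : ℕ → A := fun n => Nat.rec e (fun _ x => mul x e⁺) n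
    have pwS : ∀ n, pw (n+1) = mul (pw n) e⁺ := fun n => rfl
    have hpwnorm : ∀ n, ‖pw n‖ ≤ 1 := by
      intro n
      induction n with
      | zero => simp [pw, norm_e]
      | succ n ih =>
        rw [pwS]
        calc ‖mul (pw n) e⁺‖ ≤ ‖pw n‖ * ‖e⁺‖ := norm_mul_le _ _
          _ ≤ 1 * 1 := mul_le_mul ih hnc (norm_nonneg _) zero_le_one
          _ = 1 := by norm_num
    have key : ∀ n : ℕ, 0 ≤ e + ((n:ℝ)+1) • e⁻ ∧ e + ((n:ℝ)+1) • e⁻ ≤ pw (n+1) := by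
      intro n
      induction n with
      | zero =>
        have hpw1 : pw 1 = e⁺ := by show mul e e⁺ = e⁺; exact one_mul e⁺
        have h1 : e + ((0:ℕ):ℝ)•e⁻ + e⁻ = e⁺ := by rw [hca]; push_cast; module
        constructor
        · rw [← sub_nonneg]
          have h2 : e + (((0:ℕ):ℝ)+1) • e⁻ - 0 = e⁺ := by rw [hca]; push_cast; module
          rw [h2]; exact hc0
        · rw [pwS 0]
          have hpw0 : mul (pw 0) e⁺ = e⁺ := one_mul e⁺
          rw [hpw0, hca, ← sub_nonneg]
          have h2 : e + e⁻ - (e + (((0:ℕ):ℝ)+1) • e⁻) = 0 := by push_cast; module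
          rw [h2]
      | succ n ih =>
        obtain ⟨ih1, ih2⟩ := ih
        have hmono : mul (e + ((n:ℝ)+1) • e⁻) e⁺ ≤ mul (pw (n+1)) e⁺ := by
          have h0 := mul_nonneg _ _ (sub_nonneg.2 ih2) hc0
          have hexp : mul (pw (n+1) - (e + ((n:ℝ)+1) • e⁻)) e⁺
              = mul (pw (n+1)) e⁺ - mul (e + ((n:ℝ)+1) • e⁻) e⁺ := by
            simp only [map_sub, LinearMap.sub_apply]
          rw [hexp] at h0
          exact sub_nonneg.1 h0
        have hsub : mul e⁻ e⁺ = e⁻ + mul e⁻ e⁻ := by rw [hca, map_add, mul_one]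
        have hcomp : mul (e + ((n:ℝ)+1) • e⁻) e⁺ = e⁺ + ((n:ℝ)+1) • (e⁻ + mul e⁻ e⁻) := by
          simp only [map_add, map_smul, LinearMap.add_apply, LinearMap.smul_apply, one_mul, hsub]
        have haa : 0 ≤ mul e⁻ e⁻ := mul_nonneg _ _ ha0 ha0
        constructor
        · rw [← sub_nonneg]
          have h2 : e + (((n+1:ℕ):ℝ)+1) • e⁻ - 0 = e⁺ + ((n:ℝ)+1) • e⁻ := by
            rw [hca]; push_cast; module
          rw [h2]
          exact add_nonneg hc0 (smul_nonneg (by positivity) ha0)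
        · rw [pwS (n+1)]
          refine le_trans ?_ hmono
          rw [hcomp, ← sub_nonneg]
          have h2 : e⁺ + ((n:ℝ)+1) • (e⁻ + mul e⁻ e⁻) - (e + (((n+1:ℕ):ℝ)+1) • e⁻)
              = ((n:ℝ)+1) • mul e⁻ e⁻ := by rw [hca]; push_cast; module
          rw [h2]
          exact smul_nonneg (by positivity) haa
    have hbound : ∀ n : ℕ, ((n:ℝ)+1) * ‖e⁻‖ ≤ 2 := by
      intro n
      obtain ⟨k1, k2⟩ := key n
      have h1 : ‖e + ((n:ℝ)+1) • e⁻‖ ≤ 1 := by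
        calc ‖e + ((n:ℝ)+1) • e⁻‖ ≤ ‖pw (n+1)‖ := by
              apply HasSolidNorm.solid
              rw [abs_of_nonneg k1, abs_of_nonneg (k1.trans k2)]
              exact k2
          _ ≤ 1 := hpwnorm (n+1)
      have h2 : ‖((n:ℝ)+1) • e⁻‖ ≤ 2 := by
        calc ‖((n:ℝ)+1) • e⁻‖ = ‖(e + ((n:ℝ)+1) • e⁻) - e‖ := by congr 1; abel
          _ ≤ ‖e + ((n:ℝ)+1) • e⁻‖ + ‖e‖ := norm_sub_le _ _
          _ ≤ 1 + 1 := by rw [norm_e]; linarith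
          _ = 2 := by norm_num
      rw [norm_smul, Real.norm_eq_abs, abs_of_nonneg (by positivity : (0:ℝ) ≤ (n:ℝ)+1)] at h2
      exact h2
    have hzero : e⁻ = 0 := by
      by_contra h
      have hpos : 0 < ‖e⁻‖ := norm_pos_iff.2 h
      obtain ⟨n, hn⟩ := exists_nat_gt (2 / ‖e⁻‖)
      have hb := hbound n
      have h3 : (2:ℝ) / ‖e⁻‖ < (n:ℝ) + 1 := hn.trans (by linarith)
      rw [div_lt_iff₀ hpos] at h3
      linarith
    have h := posPart_sub_negPart e
    rw [hzero, sub_zero] at h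
    rw [← h]; exact posPart_nonneg e
  -- basic consequences of the band projection property
  have hq00 : 0 ≤ mul p p := mul_nonneg p p hp hp
  have hq0e : mul p p ≤ e := by
    have h := (hbp e he).1
    rwa [one_mul p] at h
  have hq0i : mul (mul p p) (mul p p) = mul p p := by
    have h := (hbp e he).2
    rwa [one_mul (mul p p), one_mul p] at h
  have hpp3 : mul p (mul p (mul p p)) = mul p p := by
    rw [← mul_assoc p p (mul p p)]
    exact hq0i
  tfae_have 1 → 2 := fun h => h.1
  tfae_have 2 → 3 := by
    intro h
    refine ⟨1, zero_le_one, ?_⟩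
    rw [one_smul, ← h]
    exact hq0e
  tfae_have 1 → 4 := by
    rintro ⟨hidem, hple⟩
    set L : ℝ := ‖p‖ + 1 with hL
    have hL1 : 1 ≤ L := by rw [hL]; linarith [norm_nonneg p]
    have hL0 : (0:ℝ) < L := by linarith
    have hc : (0:ℝ) < L * (L + 1) := by positivity
    refine ⟨L, by rw [hL]; exact lt_add_one _, (L * (L+1))⁻¹ • ((L+1) • e - p), ?_, ?_, ?_⟩
    · apply smul_nonneg (by positivity)
      rw [← sub_nonneg]
      have h2 : (L+1) • e - p - 0 = (e - p) + L • e := by module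
      rw [h2]
      exact add_nonneg (sub_nonneg.2 hple) (smul_nonneg hL0.le he)
    · have hexp : mul ((L+1) • e - p) (L • e + p) = (L*(L+1)) • e := by
        simp only [map_add, map_sub, map_smul, LinearMap.add_apply, LinearMap.sub_apply,
          LinearMap.smul_apply, one_mul, mul_one, hidem]
        module
      have : mul ((L * (L+1))⁻¹ • ((L+1) • e - p)) (L • e + p)
          = (L * (L+1))⁻¹ • mul ((L+1) • e - p) (L • e + p) := by
        simp only [map_smul, LinearMap.smul_apply]
      rw [this, hexp, smul_smul, inv_mul_cancel₀ hc.ne', one_smul]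
    · have hexp : mul (L • e + p) ((L+1) • e - p) = (L*(L+1)) • e := by
        simp only [map_add, map_sub, map_smul, LinearMap.add_apply, LinearMap.sub_apply,
          LinearMap.smul_apply, one_mul, mul_one, hidem]
        module
      have : mul (L • e + p) ((L * (L+1))⁻¹ • ((L+1) • e - p))
          = (L * (L+1))⁻¹ • mul (L • e + p) ((L+1) • e - p) := by
        simp only [map_smul, LinearMap.smul_apply]
      rw [this, hexp, smul_smul, inv_mul_cancel₀ hc.ne', one_smul]
  tfae_have 4 → 3 := by
    rintro ⟨L, hL, q, hq, hqa, haq⟩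
    have hL0 : (0:ℝ) < L := (norm_nonneg p).trans_lt hL
    -- `q` equals the explicit inverse `s` in both cases
    have huniq : ∀ s : A, mul (L • e + p) s = e → q = s := by
      intro s hs
      calc q = mul q e := (mul_one q).symm
        _ = mul q (mul (L • e + p) s) := by rw [hs]
        _ = mul (mul q (L • e + p)) s := (mul_assoc _ _ _).symm
        _ = mul e s := by rw [hqa]
        _ = s := one_mul s
    by_cases hq0z : mul p p = 0
    · -- p² = 0 : inverse is L⁻²•(L•e - p)
      have hexp : mul (L • e + p) ((L^2)⁻¹ • (L • e - p)) = e := by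
        have h1 : mul (L • e + p) (L • e - p) = (L^2) • e := by
          simp only [map_add, map_sub, map_smul, LinearMap.add_apply, LinearMap.sub_apply,
            LinearMap.smul_apply, one_mul, mul_one, hq0z]
          module
        have h2 : mul (L • e + p) ((L^2)⁻¹ • (L • e - p))
            = (L^2)⁻¹ • mul (L • e + p) (L • e - p) := by
          simp only [map_smul, LinearMap.smul_apply]
        rw [h2, h1, smul_smul, inv_mul_cancel₀ (by positivity), one_smul]
      have hq_eq := huniq _ hexp
      have hs0 : 0 ≤ L • e - p := by
        have h3 : 0 ≤ (L^2) • ((L^2)⁻¹ • (L • e - p)) := by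
          apply smul_nonneg (by positivity)
          rw [← hq_eq]; exact hq
        rwa [smul_smul, mul_inv_cancel₀ (by positivity), one_smul] at h3
      exact ⟨L, hL0.le, sub_nonneg.1 hs0⟩
    · -- p² ≠ 0 : then ‖p²‖ ≥ 1 and L > 1
      have h1q : 1 ≤ ‖mul p p‖ := by
        by_contra hcon
        push_neg at hcon
        have h1 : ‖mul p p‖ ≤ ‖mul p p‖ * ‖mul p p‖ := by
          calc ‖mul p p‖ = ‖mul (mul p p) (mul p p)‖ := by rw [hq0i]
            _ ≤ ‖mul p p‖ * ‖mul p p‖ := norm_mul_le _ _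
        have h2 : 0 < ‖mul p p‖ := norm_pos_iff.2 hq0z
        nlinarith
      have hL1 : 1 < L := by
        have h2 : ‖mul p p‖ ≤ ‖p‖ * ‖p‖ := norm_mul_le p p
        nlinarith [norm_nonneg p]
      have hd0 : (0:ℝ) < L^2 - 1 := by nlinarith
      have hc0 : (0:ℝ) < L^2 * (L^2-1) := by positivity
      set s' : A := (L*(L^2-1)) • e - (L^2-1) • p + L • mul p p - mul p (mul p p) with hs'
      have hexp : mul (L • e + p) ((L^2*(L^2-1))⁻¹ • s') = e := by
        have h1 : mul (L • e + p) s' = (L^2*(L^2-1)) • e := by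
          rw [hs']
          simp only [map_add, map_sub, map_smul, LinearMap.add_apply, LinearMap.sub_apply,
            LinearMap.smul_apply, one_mul, mul_one, hpp3]
          module
        have h2 : mul (L • e + p) ((L^2*(L^2-1))⁻¹ • s')
            = (L^2*(L^2-1))⁻¹ • mul (L • e + p) s' := by
          simp only [map_smul, LinearMap.smul_apply]
        rw [h2, h1, smul_smul, inv_mul_cancel₀ hc0.ne', one_smul]
      have hq_eq := huniq _ hexp
      have hs0 : 0 ≤ s' := by
        have h3 : 0 ≤ (L^2*(L^2-1)) • ((L^2*(L^2-1))⁻¹ • s') := by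
          apply smul_nonneg hc0.le
          rw [← hq_eq]; exact hq
        rwa [smul_smul, mul_inv_cancel₀ hc0.ne', one_smul] at h3
      refine ⟨(L^2-1)⁻¹ * L^3, by positivity, ?_⟩
      have h4 : (L^2-1) • p ≤ (L^3) • e := by
        rw [← sub_nonneg]
        have h5 : (L^3) • e - (L^2-1) • p
            = s' + (L • (e - mul p p) + mul p (mul p p)) := by
          rw [hs']; module
        rw [h5]
        exact add_nonneg hs0 (add_nonneg (smul_nonneg hL0.le (sub_nonneg.2 hq0e))
          (mul_nonneg p (mul p p) hp hq00))
      have h6 := smul_le_smul_of_nonneg_left h4 (inv_nonneg.2 hd0.le)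
      rwa [smul_smul, inv_mul_cancel₀ hd0.ne', one_smul, smul_smul] at h6
  tfae_have 3 → 1 := by
    rintro ⟨l, hl0, hle⟩
    set μ : ℝ := l + 1 with hμ
    have hμ1 : 1 ≤ μ := by rw [hμ]; linarith
    have hμ0 : (0:ℝ) < μ := by linarith
    have hpμ : p ≤ μ • e := by
      refine hle.trans ?_
      exact smul_le_smul_of_nonneg_right (by rw [hμ]; linarith) he
    -- more products
    have hq0p : mul (mul p p) p = mul p (mul p p) := mul_assoc p p p
    have hp3q0 : mul (mul p (mul p p)) (mul p p) = mul p (mul p p) := by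
      rw [mul_assoc, hq0i]
    have hq0p3 : mul (mul p p) (mul p (mul p p)) = mul p (mul p p) := by
      rw [← mul_assoc, hq0p, hp3q0]
    set w : A := e - mul p p with hwdef
    have hw0 : 0 ≤ w := sub_nonneg.2 hq0e
    have hww : mul w w = w := by
      rw [hwdef]
      simp only [map_sub, LinearMap.sub_apply, one_mul, mul_one, hq0i]
      module
    have hpw : mul p w = p - mul p (mul p p) := by
      rw [hwdef]; simp only [map_sub, mul_one]
    have hwp : mul w p = p - mul p (mul p p) := by
      rw [hwdef]; simp only [map_sub, LinearMap.sub_apply, one_mul, hq0p]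
    set r : A := p - mul p (mul p p) with hrdef
    have hr0 : 0 ≤ r := sub_nonneg.2 (hbp p hp).1
    have hpwr : mul p w = r := hpw
    have hwpr : mul w p = r := hwp
    have hpr : mul p r = 0 := by
      rw [hrdef]; simp only [map_sub, hpp3, sub_self]
    have hrp : mul r p = 0 := by
      rw [hrdef]
      simp only [map_sub, LinearMap.sub_apply]
      rw [mul_assoc p (mul p p) p, hq0p, hpp3, sub_self]
    have hrq0 : mul r (mul p p) = 0 := by
      rw [hrdef]
      simp only [map_sub, LinearMap.sub_apply]
      rw [hp3q0, sub_self]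
    have hq0r : mul (mul p p) r = 0 := by
      rw [hrdef]
      simp only [map_sub]
      rw [hq0p, hq0p3, sub_self]
    have hrw : mul r w = r := by
      rw [hwdef]
      simp only [map_sub, mul_one]
      rw [hrq0, sub_zero]
    have hwr : mul w r = r := by
      rw [hwdef]
      simp only [map_sub, LinearMap.sub_apply, one_mul]
      rw [hq0r, sub_zero]
    have hrr : mul r r = 0 := by
      nth_rw 2 [hrdef]
      simp only [map_sub, hrp]
      rw [← mul_assoc, hrp]
      simp only [map_zero, LinearMap.zero_apply, sub_self, zero_sub, neg_zero]
    -- master inequality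
    have hstar : ∀ y : A, 0 ≤ y →
        0 ≤ μ • y - (μ • mul p (mul y p) + mul p (mul y w) + mul w (mul y p)) := by
      intro y hy
      have hu0 : 0 ≤ μ • e - p := sub_nonneg.2 hpμ
      have hx0 : 0 ≤ mul (μ • e - p) (mul y (μ • e - p)) :=
        mul_nonneg _ _ hu0 (mul_nonneg _ _ hy hu0)
      have hD := (hbp _ hx0).1
      have hQ := (hbp y hy).2
      have hup : mul (μ • e - p) p = μ • p - mul p p := by
        simp only [map_sub, map_smul, LinearMap.sub_apply, LinearMap.smul_apply, one_mul]
      have hpu : mul p (μ • e - p) = μ • p - mul p p := by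
        simp only [map_sub, map_smul, mul_one]
      have hassoc : mul p (mul (mul (μ • e - p) (mul y (μ • e - p))) p)
          = mul (mul p (μ • e - p)) (mul y (mul (μ • e - p) p)) := by
        rw [mul_assoc (μ • e - p) (mul y (μ • e - p)) p, mul_assoc y (μ • e - p) p,
          ← mul_assoc p (μ • e - p) (mul y (mul (μ • e - p) p))]
      have hLHS : mul p (mul (mul (μ • e - p) (mul y (μ • e - p))) p)
          = (μ*μ) • mul p (mul y p) - μ • mul p (mul y (mul p p))
            - μ • mul (mul p p) (mul y p) + mul p (mul y p) := by
        rw [hassoc, hpu, hup]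
        simp only [map_sub, map_smul, LinearMap.sub_apply, LinearMap.smul_apply, smul_sub,
          smul_smul]
        rw [hQ]
        module
      have hRHS : mul (μ • e - p) (mul y (μ • e - p))
          = (μ*μ) • y - μ • mul y p - μ • mul p y + mul p (mul y p) := by
        simp only [map_sub, map_smul, LinearMap.sub_apply, LinearMap.smul_apply, one_mul,
          mul_one, smul_sub, smul_smul]
        module
      have hpyw : mul p (mul y w) = mul p y - mul p (mul y (mul p p)) := by
        rw [hwdef]; simp only [map_sub, mul_one]
      have hwyp : mul w (mul y p) = mul y p - mul (mul p p) (mul y p) := by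
        rw [hwdef]; simp only [map_sub, LinearMap.sub_apply, one_mul]
      have hkey : μ • (μ • y - (μ • mul p (mul y p) + mul p (mul y w) + mul w (mul y p)))
          = mul (μ • e - p) (mul y (μ • e - p))
            - mul p (mul (mul (μ • e - p) (mul y (μ • e - p))) p) := by
        rw [hLHS, hRHS, hpyw, hwyp]
        module
      have h2 : μ • (0:A) ≤ μ • (μ • y - (μ • mul p (mul y p) + mul p (mul y w) + mul w (mul y p))) := by
        rw [smul_zero, hkey]
        exact sub_nonneg.2 hD
      exact le_of_smul_le_smul_left h2 hμ0
    -- conjugated master inequality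
    have hstarA : ∀ y : A, 0 ≤ y →
        0 ≤ μ • y - (μ • mul r (mul y r) + mul r (mul y w) + mul w (mul y r)) := by
      intro y hy
      have hz0 := hstar y hy
      have hwzw : 0 ≤ mul w (mul (μ • y - (μ • mul p (mul y p) + mul p (mul y w) + mul w (mul y p))) w) :=
        mul_nonneg _ _ hw0 (mul_nonneg _ _ hz0 hw0)
      have hyq : 0 ≤ mul (mul p p) (mul y w) + mul y (mul p p) :=
        add_nonneg (mul_nonneg _ _ hq00 (mul_nonneg _ _ hy hw0)) (mul_nonneg _ _ hy hq00)
      have c1 : mul w (mul (mul p (mul y p)) w) = mul r (mul y r) := by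
        rw [mul_assoc p (mul y p) w, mul_assoc y p w, hpwr,
          ← mul_assoc w p (mul y r), hwpr]
      have c2 : mul w (mul (mul p (mul y w)) w) = mul r (mul y w) := by
        rw [mul_assoc p (mul y w) w, mul_assoc y w w, hww,
          ← mul_assoc w p (mul y w), hwpr]
      have c3 : mul w (mul (mul w (mul y p)) w) = mul w (mul y r) := by
        rw [mul_assoc w (mul y p) w, mul_assoc y p w, hpwr, ← mul_assoc w w (mul y r), hww]
      have c4 : mul w (mul y w) = mul y w - mul (mul p p) (mul y w) := by
        nth_rw 1 [hwdef]
        simp only [map_sub, LinearMap.sub_apply, one_mul]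
      have c5 : mul y w = y - mul y (mul p p) := by
        rw [hwdef]
        simp only [map_sub, mul_one]
      have hz : mul w (mul (μ • y - (μ • mul p (mul y p) + mul p (mul y w) + mul w (mul y p))) w)
          = μ • mul w (mul y w)
            - (μ • mul r (mul y r) + mul r (mul y w) + mul w (mul y r)) := by
        simp only [map_sub, map_add, map_smul, LinearMap.sub_apply, LinearMap.add_apply,
          LinearMap.smul_apply]
        rw [c1, c2, c3]
      have hEq : μ • y - (μ • mul r (mul y r) + mul r (mul y w) + mul w (mul y r))
          = mul w (mul (μ • y - (μ • mul p (mul y p) + mul p (mul y w) + mul w (mul y p))) w)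
            + μ • (mul (mul p p) (mul y w) + mul y (mul p p)) := by
        rw [hz, c4, c5]
        module
      rw [hEq]
      exact add_nonneg hwzw (smul_nonneg hμ0.le hyq)
    -- Step A : r = 0
    have hA : ∀ n : ℕ, (2*(n:ℝ)) • r ≤ μ • e := by
      intro n
      induction n with
      | zero =>
        have h0 : (2*((0:ℕ):ℝ)) • r = 0 := by norm_num
        rw [h0]
        exact smul_nonneg hμ0.le he
      | succ n ih =>
        have hy0 : 0 ≤ μ • e - (2*(n:ℝ)) • r := sub_nonneg.2 ih
        have e1 : mul (μ • e - (2*(n:ℝ)) • r) r = μ • r := by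
          simp only [map_sub, map_smul, LinearMap.sub_apply, LinearMap.smul_apply, one_mul, hrr]
          module
        have e2 : mul r (mul (μ • e - (2*(n:ℝ)) • r) r) = 0 := by
          rw [e1]
          simp only [map_smul, hrr, smul_zero]
        have e3 : mul (μ • e - (2*(n:ℝ)) • r) w = μ • w - (2*(n:ℝ)) • r := by
          simp only [map_sub, map_smul, LinearMap.sub_apply, LinearMap.smul_apply, one_mul, hrw]
        have e4 : mul r (mul (μ • e - (2*(n:ℝ)) • r) w) = μ • r := by
          rw [e3]
          simp only [map_sub, map_smul, hrw, hrr]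
          module
        have e5 : mul w (mul (μ • e - (2*(n:ℝ)) • r) r) = μ • r := by
          rw [e1]
          simp only [map_smul, hwr]
        have h := hstarA (μ • e - (2*(n:ℝ)) • r) hy0
        rw [e2, e4, e5] at h
        have hkey : μ • (μ • e - (2*((n:ℕ):ℝ)+2) • r)
            = μ • (μ • e - (2*(n:ℝ)) • r) - (μ • (0:A) + μ • r + μ • r) := by
          module
        have h2 : μ • (0:A) ≤ μ • (μ • e - (2*((n:ℕ):ℝ)+2) • r) := by
          rw [smul_zero, hkey]
          rw [smul_zero] at h ⊢
          exact h
        have h3 := le_of_smul_le_smul_left h2 hμ0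
        have hcast : (2*(((n+1:ℕ)):ℝ)) = 2*((n:ℕ):ℝ)+2 := by push_cast; ring
        rw [hcast]
        exact sub_nonneg.1 h3
    have hrz : r = 0 := by
      by_contra hne
      have hpos : 0 < ‖r‖ := norm_pos_iff.2 hne
      obtain ⟨n, hn⟩ := exists_nat_gt (μ / ‖r‖)
      have h1 : |((2*(n:ℝ))) • r| ≤ |μ • e| := by
        rw [abs_of_nonneg (smul_nonneg (by positivity) hr0),
          abs_of_nonneg (smul_nonneg hμ0.le he)]
        exact hA n
      have h2 := HasSolidNorm.solid h1
      rw [norm_smul, norm_smul, Real.norm_eq_abs, Real.norm_eq_abs,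
        abs_of_nonneg (by positivity : (0:ℝ) ≤ 2*(n:ℝ)), abs_of_nonneg hμ0.le, norm_e,
        _root_.mul_one] at h2
      rw [div_lt_iff₀ hpos] at hn
      nlinarith [hn, h2, hpos, Nat.cast_nonneg (α := ℝ) n]
    have hp3p : mul p (mul p p) = p := by
      rw [hrdef] at hrz
      exact (sub_eq_zero.mp hrz).symm
    -- Step B : p ≤ ν • e with ν < 2
    have hstep : ∀ ν : ℝ, 1 ≤ ν → p ≤ ν • e → (3*ν^2+1) • p ≤ (ν^3 + 3*ν) • e := by
      intro ν hν1 hνp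
      have hν0 : (0:ℝ) < ν := by linarith
      have hu0 : 0 ≤ ν • e - p := sub_nonneg.2 hνp
      have hS := hstar  -- unused
      have hSy : ∀ y : A, 0 ≤ y → ν • (mul p y + mul y p) ≤ (ν^2+1) • y := by
        intro y hy
        have h1 : 0 ≤ mul (ν • e - p) (mul y (ν • e - p)) :=
          mul_nonneg _ _ hu0 (mul_nonneg _ _ hy hu0)
        have h2 := (hbp y hy).1
        have h3 : mul (ν • e - p) (mul y (ν • e - p))
            = (ν*ν) • y - ν • mul y p - ν • mul p y + mul p (mul y p) := by
          simp only [map_sub, map_smul, LinearMap.sub_apply, LinearMap.smul_apply, one_mul,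
            mul_one, smul_sub, smul_smul]
          module
        rw [← sub_nonneg]
        have h4 : (ν^2+1) • y - ν • (mul p y + mul y p)
            = mul (ν • e - p) (mul y (ν • e - p)) + (y - mul p (mul y p)) := by
          rw [h3]; module
        rw [h4]
        exact add_nonneg h1 (sub_nonneg.2 h2)
      have h5 := hSy (ν • e - p) hu0
      have h6 : mul p (ν • e - p) + mul (ν • e - p) p = (2*ν) • p - (2:ℝ) • mul p p := by
        simp only [map_sub, map_smul, LinearMap.sub_apply, LinearMap.smul_apply, one_mul, mul_one]
        module
      rw [h6] at h5
      rw [← sub_nonneg]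
      have h7 : (ν^3 + 3*ν) • e - (3*ν^2+1) • p
          = ((ν^2+1) • (ν • e - p) - ν • ((2*ν) • p - (2:ℝ) • mul p p))
            + (2*ν) • (e - mul p p) := by
        module
      rw [h7]
      exact add_nonneg (sub_nonneg.2 h5) (smul_nonneg (by positivity) (sub_nonneg.2 hq0e))
    have hiter : ∀ n : ℕ, p ≤ (1 + l/2^n) • e := by
      intro n
      induction n with
      | zero =>
        have h0 : (1 + l/2^0 : ℝ) = μ := by rw [hμ]; norm_num; ring
        rw [h0]
        exact hpμ
      | succ n ih =>
        have hν1 : (1:ℝ) ≤ 1 + l/2^n := by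
          have : (0:ℝ) ≤ l/2^n := by positivity
          linarith
        have h := hstep (1 + l/2^n) hν1 ih
        have hc : (0:ℝ) < 3*(1 + l/2^n)^2+1 := by positivity
        have hscal : (1 + l/2^n)^3 + 3*(1 + l/2^n) ≤ (3*(1 + l/2^n)^2+1) * (1 + l/2^(n+1)) := by
          have ht0 : (0:ℝ) ≤ l/2^n := by positivity
          have h2 : (l:ℝ)/2^(n+1) = (l/2^n)/2 := by
            rw [pow_succ]; ring
          rw [h2]
          nlinarith [ht0]
        have h8 : (3*(1 + l/2^n)^2+1) • p ≤ (3*(1 + l/2^n)^2+1) • ((1 + l/2^(n+1)) • e) := by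
          refine h.trans ?_
          rw [smul_smul]
          exact smul_le_smul_of_nonneg_right hscal he
        exact le_of_smul_le_smul_left h8 hc
    obtain ⟨n, hn⟩ := pow_unbounded_of_one_lt l one_lt_two
    have hν1 : (1:ℝ) ≤ 1 + l/2^n := by
      have : (0:ℝ) ≤ l/2^n := by positivity
      linarith
    have hν2 : (1 + l/2^n : ℝ) < 2 := by
      have h2 : (l:ℝ)/2^n < 1 := (div_lt_one (by positivity)).2 hn
      linarith
    have hpν : p ≤ (1 + l/2^n) • e := hiter n
    -- Step C : m = 0
    have hq0pp : mul (mul p p) p = p := by rw [hq0p, hp3p]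
    have hm2 : mul (mul p p - p) (mul p p - p) = (2:ℝ) • (mul p p - p) := by
      simp only [map_sub, LinearMap.sub_apply, hq0i, hp3p, hq0pp]
      module
    have hm_le : mul p p - p ≤ (1 + l/2^n) • e := by
      calc mul p p - p ≤ mul p p := sub_le_self _ hp
        _ ≤ e := hq0e
        _ = (1:ℝ) • e := (one_smul ℝ e).symm
        _ ≤ (1 + l/2^n) • e := smul_le_smul_of_nonneg_right hν1 he
    have hm_neg : -(mul p p - p) ≤ (1 + l/2^n) • e := by
      rw [neg_sub]
      calc p - mul p p ≤ p := sub_le_self _ hq00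
        _ ≤ (1 + l/2^n) • e := hpν
    have hmnorm : ‖mul p p - p‖ ≤ 1 + l/2^n := by
      have h1 : |mul p p - p| ≤ |(1 + l/2^n) • e| := by
        rw [abs_of_nonneg (smul_nonneg (by linarith) he)]
        exact abs_le'.mpr ⟨hm_le, hm_neg⟩
      have h2 := HasSolidNorm.solid h1
      rwa [norm_smul, Real.norm_eq_abs, abs_of_nonneg (by linarith : (0:ℝ) ≤ 1 + l/2^n),
        norm_e, _root_.mul_one] at h2
    have hm0 : mul p p - p = 0 := by
      by_contra hne
      have hpos : 0 < ‖mul p p - p‖ := norm_pos_iff.2 hne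
      have h1 : 2*‖mul p p - p‖ ≤ ‖mul p p - p‖*‖mul p p - p‖ := by
        calc 2*‖mul p p - p‖ = ‖(2:ℝ) • (mul p p - p)‖ := by
              rw [norm_smul, Real.norm_eq_abs]; norm_num
          _ = ‖mul (mul p p - p) (mul p p - p)‖ := by rw [hm2]
          _ ≤ ‖mul p p - p‖*‖mul p p - p‖ := norm_mul_le _ _
      nlinarith
    have hfinal : mul p p = p := by
      have := sub_eq_zero.mp hm0
      exact this
    exact ⟨hfinal, hfinal ▸ hq0e⟩
  tfae_finish
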